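/- Let N be a natural number, C > 0, and let F : (0,∞) → ℂ be N-times continuously differentiable with sup_{ζ > 0} |ζ^j F^{(j)}(ζ)| ≤ C for all 0 ≤ j ≤ N. Then the function G(ζ) = F(√ζ) is N-times continuously differentiable on (0,∞) and there is a constant C', depending only on C and N, such that sup_{ζ > 0} |ζ^j G^{(j)}(ζ)| ≤ C' for all 0 ≤ j ≤ N. -/

import Mathlib

open Set

namespace MihlinSqrtAux

lemma udS : UniqueDiffOn ℝ (Ioi (0:ℝ)) := isOpen_Ioi.uniqueDiffOn

lemma sqrt_cdo {n : WithTop ℕ∞} : ContDiffOn ℝ n Real.sqrt (Ioi (0:ℝ)) :=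
  fun x hx => (Real.contDiffAt_sqrt (ne_of_gt hx)).contDiffWithinAt

lemma sqrt_mapsTo : MapsTo Real.sqrt (Ioi (0:ℝ)) (Ioi (0:ℝ)) :=
  fun x hx => Real.sqrt_pos.2 hx

lemma hasDerivAt_iterated {H : ℝ → ℂ} {N : ℕ} (hH : ContDiffOn ℝ N H (Ioi 0))
    {m : ℕ} (hm : m < N) {p : ℝ} (hp : p ∈ Ioi (0:ℝ)) :
    HasDerivAt (iteratedDerivWithin m H (Ioi 0))
      (iteratedDerivWithin (m+1) H (Ioi 0) p) p := by
  have hd : DifferentiableOn ℝ (iteratedDerivWithin m H (Ioi 0)) (Ioi 0) :=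
    hH.differentiableOn_iteratedDerivWithin (by exact_mod_cast hm) udS
  have h1 : DifferentiableAt ℝ (iteratedDerivWithin m H (Ioi 0)) p :=
    (hd p hp).differentiableAt (isOpen_Ioi.mem_nhds hp)
  have h2 := h1.hasDerivAt
  rwa [← derivWithin_of_isOpen isOpen_Ioi hp, ← iteratedDerivWithin_succ] at h2

lemma scale {H : ℝ → ℂ} {N : ℕ} (hH : ContDiffOn ℝ N H (Ioi 0))
    {c : ℝ} (hc : 0 < c) :
    ∀ n : ℕ, n ≤ N → ∀ {x : ℝ}, x ∈ Ioi (0:ℝ) →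
    iteratedDerivWithin n (fun y => H (c*y)) (Ioi 0) x
      = (c:ℂ)^n * iteratedDerivWithin n H (Ioi 0) (c*x) := by
  intro n
  induction n with
  | zero => intro _ x hx; simp
  | succ n ih =>
    intro hn x hx
    have hn' : n ≤ N := le_of_lt (Nat.lt_of_succ_le hn)
    rw [iteratedDerivWithin_succ, derivWithin_of_isOpen isOpen_Ioi hx]
    have hev : iteratedDerivWithin n (fun y => H (c*y)) (Ioi 0)
        =ᶠ[nhds x] fun y => (c:ℂ)^n * iteratedDerivWithin n H (Ioi 0) (c*y) := by
      filter_upwards [isOpen_Ioi.mem_nhds hx] with y hy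
      exact ih hn' hy
    rw [hev.deriv_eq]
    have hcx : c*x ∈ Ioi (0:ℝ) := mul_pos hc hx
    have h3 : HasDerivAt (fun y : ℝ => c*y) c x := by
      simpa using (hasDerivAt_id x).const_mul c
    have h1 : HasDerivAt (fun y : ℝ => iteratedDerivWithin n H (Ioi 0) (c*y))
        (c • iteratedDerivWithin (n+1) H (Ioi 0) (c*x)) x :=
      (hasDerivAt_iterated hH (Nat.lt_of_succ_le hn) hcx).scomp x h3
    rw [(h1.const_mul ((c:ℂ)^n)).deriv]
    rw [Complex.real_smul]
    ring

noncomputable def sc : ℕ → ℝ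
  | 0 => 1
  | n+1 => ((1:ℝ)/2 - n) * sc n

lemma sqrt_iter : ∀ (n : ℕ) {x : ℝ}, x ∈ Ioi (0:ℝ) →
    iteratedDerivWithin n Real.sqrt (Ioi 0) x = sc n * x ^ ((1:ℝ)/2 - n) := by
  intro n
  induction n with
  | zero =>
    intro x hx
    simp [sc, Real.sqrt_eq_rpow]
  | succ n ih =>
    intro x hx
    rw [iteratedDerivWithin_succ, derivWithin_of_isOpen isOpen_Ioi hx]
    have hev : iteratedDerivWithin n Real.sqrt (Ioi 0)
        =ᶠ[nhds x] fun y => sc n * y ^ ((1:ℝ)/2 - n) := by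
      filter_upwards [isOpen_Ioi.mem_nhds hx] with y hy
      exact ih hy
    rw [hev.deriv_eq]
    have h1 : HasDerivAt (fun y : ℝ => y ^ ((1:ℝ)/2 - n))
        (((1:ℝ)/2 - n) * x ^ ((1:ℝ)/2 - n - 1)) x :=
      Real.hasDerivAt_rpow_const (Or.inl (ne_of_gt hx))
    rw [(h1.const_mul (sc n)).deriv]
    have : ((1:ℝ)/2 - (n+1:ℕ)) = (1:ℝ)/2 - n - 1 := by push_cast; ring
    rw [sc, this]
    ring

lemma sc_abs_le (n : ℕ) : |sc n| ≤ (n.factorial : ℝ) := by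
  induction n with
  | zero => simp [sc]
  | succ n ih =>
    rw [sc, abs_mul]
    have h1 : |(1:ℝ)/2 - n| ≤ (n:ℝ) + 1 := by
      rw [abs_le]
      constructor <;> [nlinarith [Nat.cast_nonneg (α := ℝ) n]; nlinarith [Nat.cast_nonneg (α := ℝ) n]]
    have h2 : (0:ℝ) ≤ |sc n| := abs_nonneg _
    calc |(1:ℝ)/2 - n| * |sc n| ≤ ((n:ℝ)+1) * (n.factorial : ℝ) :=
          mul_le_mul h1 ih h2 (by positivity)
      _ = ((n+1).factorial : ℝ) := by
          rw [Nat.factorial_succ]; push_cast; ring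

lemma bound_at_one {N : ℕ} {C : ℝ} (hC : 0 < C) {F : ℝ → ℂ}
    (hF : ContDiffOn ℝ N F (Ioi 0))
    (hb : ∀ i : ℕ, i ≤ N → ‖iteratedDerivWithin i F (Ioi 0) 1‖ ≤ C)
    {j : ℕ} (hj : j ≤ N) :
    ‖iteratedDerivWithin j (fun ζ : ℝ => F (Real.sqrt ζ)) (Ioi 0) 1‖ ≤
      (j.factorial : ℝ) * C * (N.factorial : ℝ)^j := by
  have h1 : (1:ℝ) ∈ Ioi (0:ℝ) := mem_Ioi.2 one_pos
  have key := norm_iteratedFDerivWithin_comp_le (𝕜 := ℝ) (g := F) (f := Real.sqrt)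
    (n := j) (s := Ioi (0:ℝ)) (t := Ioi (0:ℝ)) (x := 1) (N := (N : WithTop ℕ∞))
    hF sqrt_cdo (by exact_mod_cast hj) udS udS sqrt_mapsTo h1
    (C := C) (D := (N.factorial : ℝ))
    (fun i hi => by
      rw [norm_iteratedFDerivWithin_eq_norm_iteratedDerivWithin, Real.sqrt_one]
      exact hb i (le_trans hi hj))
    (fun i hi1 hij => by
      rw [norm_iteratedFDerivWithin_eq_norm_iteratedDerivWithin, sqrt_iter i h1,
        Real.one_rpow, mul_one, Real.norm_eq_abs]
      calc |sc i| ≤ (i.factorial : ℝ) := sc_abs_le i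
        _ ≤ (N.factorial : ℝ) := by
            exact_mod_cast Nat.factorial_le (le_trans hij hj)
        _ ≤ (N.factorial : ℝ)^i := by
            apply le_self_pow₀
            · exact_mod_cast Nat.one_le_iff_ne_zero.2 N.factorial_ne_zero
            · omega)
  rw [← norm_iteratedFDerivWithin_eq_norm_iteratedDerivWithin]
  exact key

end MihlinSqrtAux

open MihlinSqrtAux in
/-- If `F : (0,∞) → ℂ` is `N`-times continuously differentiable with
`sup_{ζ > 0} |ζ^j F^{(j)}(ζ)| ≤ C` for all `0 ≤ j ≤ N`, then `G(ζ) = F(√ζ)` is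
`N`-times continuously differentiable on `(0,∞)` and satisfies
`sup_{ζ > 0} |ζ^j G^{(j)}(ζ)| ≤ C'` for all `0 ≤ j ≤ N`, for a constant `C'` depending
only on `C` and `N`. -/
theorem mihlin_condition_sqrt_substitution (N : ℕ) (C : ℝ) (hC : 0 < C) :
    ∃ C' : ℝ,
      ∀ F : ℝ → ℂ,
        ContDiffOn ℝ N F (Ioi (0 : ℝ)) →
        (∀ j : ℕ, j ≤ N → ∀ ζ : ℝ, 0 < ζ →
          ζ ^ j * ‖iteratedDerivWithin j F (Ioi (0 : ℝ)) ζ‖ ≤ C) →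
        ContDiffOn ℝ N (fun ζ : ℝ => F (Real.sqrt ζ)) (Ioi (0 : ℝ)) ∧
        (∀ j : ℕ, j ≤ N → ∀ ζ : ℝ, 0 < ζ →
          ζ ^ j *
            ‖iteratedDerivWithin j (fun ζ : ℝ => F (Real.sqrt ζ)) (Ioi (0 : ℝ)) ζ‖ ≤ C') := by
  refine ⟨(N.factorial : ℝ) * C * (N.factorial : ℝ)^N, ?_⟩
  intro F hF hb
  have hG : ContDiffOn ℝ N (fun ζ : ℝ => F (Real.sqrt ζ)) (Ioi (0 : ℝ)) :=
    hF.comp sqrt_cdo sqrt_mapsTo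
  refine ⟨hG, ?_⟩
  intro j hj ζ hζ
  set t := Real.sqrt ζ with ht_def
  have ht : 0 < t := Real.sqrt_pos.2 hζ
  -- the scaled function F_t
  set Ft : ℝ → ℂ := fun y => F (t * y) with hFt_def
  have hFt : ContDiffOn ℝ N Ft (Ioi 0) := by
    apply hF.comp ((contDiff_const.mul contDiff_id).contDiffOn)
    intro y hy
    exact mul_pos ht hy
  -- F_t satisfies the bound at 1 for all orders
  have hbt : ∀ i : ℕ, i ≤ N → ‖iteratedDerivWithin i Ft (Ioi 0) 1‖ ≤ C := by
    intro i hi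
    have hsc := scale hF ht i hi (mem_Ioi.2 one_pos)
    rw [hFt_def, hsc, mul_one, norm_mul, norm_pow, Complex.norm_real,
      Real.norm_eq_abs, abs_of_pos ht]
    have := hb i hi t ht
    linarith [this]
  -- key identity : (fun y => G (ζ*y)) = Ft ∘ sqrt
  have hkey : (fun y : ℝ => F (Real.sqrt (ζ * y))) = fun y : ℝ => Ft (Real.sqrt y) := by
    funext y
    rw [hFt_def]
    simp only [Real.sqrt_mul hζ.le, ht_def]
  -- scale G
  have hscG := scale hG hζ j hj (mem_Ioi.2 one_pos)
  rw [mul_one] at hscG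
  have h2 : ((ζ:ℂ))^j * iteratedDerivWithin j (fun ζ : ℝ => F (Real.sqrt ζ)) (Ioi 0) ζ
      = iteratedDerivWithin j (fun y : ℝ => Ft (Real.sqrt y)) (Ioi 0) 1 := by
    rw [← hscG, ← hkey]
  have h3 : ζ ^ j * ‖iteratedDerivWithin j (fun ζ : ℝ => F (Real.sqrt ζ)) (Ioi 0) ζ‖
      = ‖iteratedDerivWithin j (fun y : ℝ => Ft (Real.sqrt y)) (Ioi 0) 1‖ := by
    rw [← h2, norm_mul, norm_pow, Complex.norm_real, Real.norm_eq_abs, abs_of_pos hζ]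
  rw [h3]
  calc ‖iteratedDerivWithin j (fun y : ℝ => Ft (Real.sqrt y)) (Ioi 0) 1‖
      ≤ (j.factorial : ℝ) * C * (N.factorial : ℝ)^j := bound_at_one hC hFt hbt hj
    _ ≤ (N.factorial : ℝ) * C * (N.factorial : ℝ)^N := by
        have h4 : (j.factorial : ℝ) ≤ (N.factorial : ℝ) := by
          exact_mod_cast Nat.factorial_le hj
        have h5 : (N.factorial : ℝ)^j ≤ (N.factorial : ℝ)^N := by
          apply pow_le_pow_right₀ _ hj
          exact_mod_cast Nat.one_le_iff_ne_zero.2 N.factorial_ne_zero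
        have h7 : (j.factorial : ℝ) * C ≤ (N.factorial : ℝ) * C :=
          mul_le_mul_of_nonneg_right h4 hC.le
        exact mul_le_mul h7 h5 (by positivity) (by positivity)
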